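/- arXiv:1202.6551 — 2 statements merged into one kernel-verified Lean document; each statement's English description precedes it below -/
import Mathlib

section
/- For any finite simple graph G=(V,E) and any vertex u ∈ V, (√X_u)† · √Z_{N(u)} · |G⟩ = |G*u⟩, where G*u is the local complementation of G at u. -/
/-- Local complementation `G*u`. -/
def localComp {V : Type*} (G : SimpleGraph V) (u : V) : SimpleGraph V where
  Adj x y := x ≠ y ∧ Xor (G.Adj x y) (G.Adj u x ∧ G.Adj u y)
  symm := by
    constructor
    rintro x y ⟨hxy, h⟩
    refine ⟨hxy.symm, ?_⟩
    rw [G.adj_comm y x, and_comm]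
    exact h
  loopless := by constructor; rintro x ⟨h, -⟩; exact h rfl

instance {V : Type*} [DecidableEq V] (G : SimpleGraph V) [DecidableRel G.Adj] (u : V) :
    DecidableRel (localComp G u).Adj :=
  fun x y => inferInstanceAs (Decidable (x ≠ y ∧ Xor (G.Adj x y) (G.Adj u x ∧ G.Adj u y)))

noncomputable section

/-- The state space of qubits indexed by `V`: ℂ^{2^|V|}, given by amplitudes on the
computational basis states `|x⟩`, `x : V → Bool`. -/
abbrev QState (V : Type*) := (V → Bool) → ℂ

variable {V : Type*} [Fintype V] [DecidableEq V]

/-- The Pauli operator `Z_S = ∏_{u∈S} Z_u`: `Z_S |x⟩ = (-1)^{|S ∩ supp x|} |x⟩`. -/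
def Zop (S : Finset V) (ψ : QState V) : QState V :=
  fun x => (-1 : ℂ) ^ (S.filter (fun u => x u = true)).card * ψ x

/-- The Pauli operator `X_u`: flips qubit `u`. -/
def Xop (u : V) (ψ : QState V) : QState V :=
  fun x => ψ (Function.update x u (!x u))

/-- `q(x)`: the number of edges of `G` with both endpoints in the support of `x`. -/
def qVal (G : SimpleGraph V) [DecidableRel G.Adj] (x : V → Bool) : ℕ :=
  (G.edgeFinset.filter (fun e => ∀ v ∈ e, x v = true)).card

/-- The graph state `|G⟩ = 2^{-n/2} ∑_x (-1)^{q(x)} |x⟩`. -/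
def graphState (G : SimpleGraph V) [DecidableRel G.Adj] : QState V :=
  fun x => (-1 : ℂ) ^ qVal G x / (Real.sqrt (2 ^ Fintype.card V) : ℂ)

/-- The signed graph state `|G;S⟩ = Z_S |G⟩`. -/
def sgState (G : SimpleGraph V) [DecidableRel G.Adj] (S : Finset V) : QState V :=
  Zop S (graphState G)

/-- The hermitian inner product on `QState V`. -/
def qInner (ψ φ : QState V) : ℂ := ∑ x : V → Bool, starRingEnd ℂ (ψ x) * φ x

/-- `√X_u := (e^{iπ/4}/√2)(I - i·X_u)`. -/
def sqrtX (u : V) (ψ : QState V) : QState V :=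
  fun x => (Complex.exp (Complex.I * (Real.pi / 4)) / (Real.sqrt 2 : ℂ)) *
    (ψ x - Complex.I * Xop u ψ x)

/-- `√Z_S := ∏_{u∈S} √Z_u`, where `√Z_u := (e^{iπ/4}/√2)(I - i·Z_u)`: each `√Z_u` is
diagonal with `√Z_u |x⟩ = (e^{iπ/4}/√2)(1 - i·(-1)^{x_u}) |x⟩`, so `√Z_S` is diagonal
with the product of these eigenvalues. -/
def sqrtZset (S : Finset V) (ψ : QState V) : QState V :=
  fun x => (∏ u ∈ S, (Complex.exp (Complex.I * (Real.pi / 4)) / (Real.sqrt 2 : ℂ)) *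
    (1 - Complex.I * (if x u then -1 else 1))) * ψ x

end

noncomputable section AuxLemmas

open Finset

local notation "cc" => (Complex.exp (Complex.I * (Real.pi / 4)) / (Real.sqrt 2 : ℂ))

lemma sqrt2_sq : ((Real.sqrt 2 : ℝ) : ℂ) ^ 2 = 2 := by
  norm_cast
  rw [Real.sq_sqrt] <;> norm_num

lemma cc_eq : cc = (1 + Complex.I) / 2 := by
  rw [mul_comm Complex.I, Complex.exp_mul_I]
  rw [show ((Real.pi:ℂ)/4) = ((Real.pi/4 : ℝ) : ℂ) by push_cast; ring,
    ← Complex.ofReal_cos, ← Complex.ofReal_sin, Real.cos_pi_div_four, Real.sin_pi_div_four]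
  have h2 := sqrt2_sq
  have hne : ((Real.sqrt 2 : ℝ) : ℂ) ≠ 0 := by
    intro h; rw [h] at h2; norm_num at h2
  push_cast
  rw [div_eq_div_iff hne (by norm_num : (2:ℂ) ≠ 0)]
  ring

lemma conj_cc : (starRingEnd ℂ) cc = (1 - Complex.I) / 2 := by
  rw [cc_eq, map_div₀, map_add, map_one, Complex.conj_I, map_ofNat]
  ring

lemma key_scalar (d : ℕ) :
    (starRingEnd ℂ) cc * Complex.I ^ d * (1 + Complex.I * (-1:ℂ) ^ d)
      = (-1:ℂ) ^ (d.choose 2) := by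
  have hstep : ∀ m : ℕ, (m+1).choose 2 = m.choose 2 + m := by
    intro m
    rw [Nat.choose_succ_succ, Nat.choose_one_right, Nat.add_comm]
  induction d using Nat.strong_induction_on with
  | _ d ih =>
    match d with
    | 0 => rw [conj_cc]; norm_num; linear_combination (-(1:ℂ)/2) * Complex.I_sq
    | 1 => rw [conj_cc]; norm_num; linear_combination ((Complex.I - 2)/2) * Complex.I_sq
    | 2 => rw [conj_cc]; norm_num; linear_combination (-(1:ℂ)/2) * Complex.I_sq
    | 3 => rw [conj_cc]; norm_num; linear_combination ((Complex.I - 2)/2) * Complex.I_sq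
    | (n+4) =>
      have h1 : (n+4).choose 2 = n.choose 2 + (2 * (2*n + 3)) := by
        have e0 := hstep n
        have e1 := hstep (n+1)
        have e2 := hstep (n+2)
        have e3 := hstep (n+3)
        rw [show n+1+1 = n+2 by ring] at e1
        rw [show n+2+1 = n+3 by ring] at e2
        rw [show n+3+1 = n+4 by ring] at e3
        omega
      have h2 : Complex.I ^ (n+4) = Complex.I ^ n := by
        rw [pow_add]; norm_num [Complex.I_pow_four]
      have h3 : (-1:ℂ) ^ (n+4) = (-1:ℂ) ^ n := by
        rw [pow_add]; norm_num
      have h4 : (-1:ℂ) ^ ((n+4).choose 2) = (-1:ℂ) ^ (n.choose 2) := by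
        rw [h1, pow_add, pow_mul]; norm_num
      rw [h2, h3, h4]
      exact ih n (by omega)

end AuxLemmas
section Aux2
open Finset
variable {V : Type*} [Fintype V] [DecidableEq V]

omit [Fintype V] in
lemma update_not_invol (y : V → Bool) (u : V) :
    Function.update (Function.update y u (!y u)) u (!(Function.update y u (!y u)) u) = y := by
  simp [Function.update_idem]

omit [Fintype V] in
lemma update_not_eq_iff (u : V) (x y : V → Bool) :
    Function.update x u (!x u) = y ↔ x = Function.update y u (!y u) := by
  constructor
  · rintro rfl; exact (update_not_invol x u).symm
  · rintro rfl; exact update_not_invol y u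

omit [Fintype V] [DecidableEq V] in
lemma sqrtZset_apply (S : Finset V) (ψ : QState V) (x : V → Bool) :
    sqrtZset S ψ x = Complex.I ^ (S.filter (fun v => x v = true)).card * ψ x := by
  unfold sqrtZset
  congr 1
  have h : ∀ v ∈ S,
      (Complex.exp (Complex.I * (Real.pi / 4)) / (Real.sqrt 2 : ℂ)) *
        (1 - Complex.I * (if x v then (-1:ℂ) else 1))
      = (if x v = true then Complex.I else 1) := by
    intro v _
    cases hx : x v <;> simp only [hx, if_true, if_false, Bool.false_eq_true] <;> rw [cc_eq]
    · linear_combination (-(1:ℂ)/2) * Complex.I_sq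
    · linear_combination ((1:ℂ)/2) * Complex.I_sq
  rw [Finset.prod_congr rfl h, Finset.prod_ite, Finset.prod_const, Finset.prod_const,
    one_pow, mul_one]

lemma qVal_split (G : SimpleGraph V) [DecidableRel G.Adj] (u : V) (x : V → Bool) :
    qVal G x
      = (G.edgeFinset.filter (fun e => (∀ v ∈ e, x v = true) ∧ u ∈ e)).card
        + (G.edgeFinset.filter (fun e => (∀ v ∈ e, x v = true) ∧ u ∉ e)).card := by
  unfold qVal
  rw [← Finset.filter_filter, ← Finset.filter_filter,
    Finset.card_filter_add_card_filter_not]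

lemma qVal_at_u (G : SimpleGraph V) [DecidableRel G.Adj] (u : V) (x : V → Bool) :
    (G.edgeFinset.filter (fun e => (∀ v ∈ e, x v = true) ∧ u ∈ e)).card
      = if x u = true then ((G.neighborFinset u).filter (fun v => x v = true)).card else 0 := by
  rcases Bool.eq_false_or_eq_true (x u) with hx | hx
  · rw [hx, if_pos rfl]
    refine (Finset.card_bij (fun w _ => s(u, w)) ?_ ?_ ?_).symm
    · intro w hw
      rw [Finset.mem_filter] at hw ⊢
      obtain ⟨hw1, hw2⟩ := hw
      rw [SimpleGraph.mem_neighborFinset] at hw1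
      refine ⟨SimpleGraph.mem_edgeFinset.2 hw1, ?_, Sym2.mem_mk_left u w⟩
      intro v hv
      rcases Sym2.mem_iff.1 hv with rfl | rfl
      · exact hx
      · exact hw2
    · intro w1 h1 w2 h2 h
      exact Sym2.congr_right.1 h
    · intro e he
      rw [Finset.mem_filter] at he
      obtain ⟨he1, hall, hue⟩ := he
      obtain ⟨w, rfl⟩ := Sym2.mem_iff_exists.1 hue
      refine ⟨w, ?_, rfl⟩
      rw [Finset.mem_filter, SimpleGraph.mem_neighborFinset]
      exact ⟨SimpleGraph.mem_edgeFinset.1 he1, hall w (Sym2.mem_mk_right u w)⟩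
  · rw [hx, if_neg (by simp)]
    rw [Finset.card_eq_zero, Finset.filter_eq_empty_iff]
    rintro e he ⟨hall, hue⟩
    have := hall u hue
    rw [hx] at this
    exact Bool.false_ne_true this

lemma qVal_add_update (G : SimpleGraph V) [DecidableRel G.Adj] (u : V) (y : V → Bool) :
    qVal G y + qVal G (Function.update y u (!y u))
      = 2 * (G.edgeFinset.filter (fun e => (∀ v ∈ e, y v = true) ∧ u ∉ e)).card
        + ((G.neighborFinset u).filter (fun v => y v = true)).card := by
  set y' := Function.update y u (!y u) with hy'
  have hyu : ∀ v, v ≠ u → y' v = y v := fun v hv => Function.update_of_ne hv _ y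
  have hB : (G.edgeFinset.filter (fun e => (∀ v ∈ e, y' v = true) ∧ u ∉ e))
      = G.edgeFinset.filter (fun e => (∀ v ∈ e, y v = true) ∧ u ∉ e) := by
    apply Finset.filter_congr
    intro e _
    constructor
    · rintro ⟨hall, hue⟩
      exact ⟨fun v hv => by rw [← hyu v (fun h => hue (h ▸ hv))]; exact hall v hv, hue⟩
    · rintro ⟨hall, hue⟩
      exact ⟨fun v hv => by rw [hyu v (fun h => hue (h ▸ hv))]; exact hall v hv, hue⟩
  have hN : ((G.neighborFinset u).filter (fun v => y' v = true))
      = (G.neighborFinset u).filter (fun v => y v = true) := by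
    apply Finset.filter_congr
    intro v hv
    rw [SimpleGraph.mem_neighborFinset] at hv
    rw [hyu v (G.ne_of_adj hv).symm]
  have hyu' : y' u = !y u := Function.update_self u (!y u) y
  rw [qVal_split G u y, qVal_split G u y', qVal_at_u, qVal_at_u, hB, hN, hyu']
  cases hx : y u <;> simp <;> omega

end Aux2
section Aux3
open Finset
variable {V : Type*} [Fintype V] [DecidableEq V]

/-- The complete graph on the neighborhood of `u`. -/
def nbrGraph (G : SimpleGraph V) (u : V) : SimpleGraph V where
  Adj a b := G.Adj u a ∧ G.Adj u b ∧ a ≠ b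
  symm := by constructor; rintro a b ⟨h1, h2, h3⟩; exact ⟨h2, h1, h3.symm⟩
  loopless := by constructor; rintro a ⟨-, -, h⟩; exact h rfl

instance nbrGraphDec (G : SimpleGraph V) [DecidableRel G.Adj] (u : V) :
    DecidableRel (nbrGraph G u).Adj :=
  fun a b => inferInstanceAs (Decidable (G.Adj u a ∧ G.Adj u b ∧ a ≠ b))

omit [Fintype V] [DecidableEq V] in
lemma localComp_adj (G : SimpleGraph V) (u a b : V) :
    (localComp G u).Adj a b ↔ a ≠ b ∧ Xor' (G.Adj a b) (G.Adj u a ∧ G.Adj u b) := Iff.rfl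

lemma edgeFinset_localComp (G : SimpleGraph V) [DecidableRel G.Adj] (u : V) :
    (localComp G u).edgeFinset = symmDiff G.edgeFinset (nbrGraph G u).edgeFinset := by
  ext e
  induction e using Sym2.ind with
  | _ a b =>
    rw [Finset.mem_symmDiff]
    simp only [SimpleGraph.mem_edgeFinset, SimpleGraph.mem_edgeSet]
    rw [localComp_adj]
    have hne : G.Adj a b → a ≠ b := G.ne_of_adj
    show _ ∧ Xor' _ _ ↔ (_ ∧ ¬ (nbrGraph G u).Adj a b) ∨ ((nbrGraph G u).Adj a b ∧ _)
    show _ ↔ (_ ∧ ¬ (G.Adj u a ∧ G.Adj u b ∧ a ≠ b)) ∨ ((G.Adj u a ∧ G.Adj u b ∧ a ≠ b) ∧ _)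
    unfold Xor' Xor
    tauto

lemma prod_symmDiff_of_sq_one (s t : Finset (Sym2 V)) (f : Sym2 V → ℂ)
    (hf : ∀ e, f e * f e = 1) :
    ∏ e ∈ symmDiff s t, f e = (∏ e ∈ s, f e) * ∏ e ∈ t, f e := by
  have h1 : Disjoint (symmDiff s t) (s ∩ t) := by
    have := disjoint_symmDiff_inf s t
    rwa [Finset.inf_eq_inter] at this
  have h2 : (symmDiff s t) ∪ (s ∩ t) = s ∪ t := by
    have := symmDiff_sup_inf s t
    rwa [Finset.sup_eq_union, Finset.inf_eq_inter] at this
  have h3 : (∏ e ∈ symmDiff s t, f e) * ∏ e ∈ s ∩ t, f e = ∏ e ∈ s ∪ t, f e := by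
    rw [← Finset.prod_union h1, h2]
  have h4 : (∏ e ∈ s ∪ t, f e) * ∏ e ∈ s ∩ t, f e = (∏ e ∈ s, f e) * ∏ e ∈ t, f e :=
    Finset.prod_union_inter
  have h5 : (∏ e ∈ s ∩ t, f e) * ∏ e ∈ s ∩ t, f e = 1 := by
    rw [← Finset.prod_mul_distrib]
    exact Finset.prod_eq_one (fun e _ => hf e)
  calc ∏ e ∈ symmDiff s t, f e
      = (∏ e ∈ symmDiff s t, f e) * ((∏ e ∈ s ∩ t, f e) * ∏ e ∈ s ∩ t, f e) := by
        rw [h5, mul_one]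
    _ = ((∏ e ∈ symmDiff s t, f e) * ∏ e ∈ s ∩ t, f e) * ∏ e ∈ s ∩ t, f e := by ring
    _ = (∏ e ∈ s, f e) * ∏ e ∈ t, f e := by rw [h3, h4]

lemma neg_one_pow_qVal (H : SimpleGraph V) [DecidableRel H.Adj] (x : V → Bool) :
    (∏ e ∈ H.edgeFinset, (if ∀ v ∈ e, x v = true then (-1:ℂ) else 1))
      = (-1:ℂ) ^ (qVal H x) := by
  rw [Finset.prod_ite, Finset.prod_const, Finset.prod_const, one_pow, mul_one]
  rfl

lemma qVal_nbrGraph (G : SimpleGraph V) [DecidableRel G.Adj] (u : V) (y : V → Bool) :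
    qVal (nbrGraph G u) y
      = (((G.neighborFinset u).filter (fun v => y v = true)).card).choose 2 := by
  set T := (G.neighborFinset u).filter (fun v => y v = true) with hT
  have hset : (nbrGraph G u).edgeFinset.filter (fun e => ∀ v ∈ e, y v = true)
      = T.sym2.filter (fun e => ¬ e.IsDiag) := by
    ext e
    induction e using Sym2.ind with
    | _ a b =>
      simp only [Finset.mem_filter, SimpleGraph.mem_edgeFinset, SimpleGraph.mem_edgeSet,
        Finset.mk_mem_sym2_iff, Sym2.isDiag_iff_proj_eq, hT,
        SimpleGraph.mem_neighborFinset, Sym2.mem_iff]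
      constructor
      · rintro ⟨⟨h1, h2, h3⟩, hall⟩
        exact ⟨⟨⟨h1, hall a (Or.inl rfl)⟩, ⟨h2, hall b (Or.inr rfl)⟩⟩, h3⟩
      · rintro ⟨⟨⟨h1, ha⟩, ⟨h2, hb⟩⟩, h3⟩
        refine ⟨⟨h1, h2, h3⟩, ?_⟩
        rintro v (rfl | rfl)
        · exact ha
        · exact hb
  have hdiag : T.sym2.filter (fun e => e.IsDiag) = T.image Sym2.diag := by
    ext e
    induction e using Sym2.ind with
    | _ a b =>
      simp only [Finset.mem_filter, Finset.mk_mem_sym2_iff, Sym2.isDiag_iff_proj_eq,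
        Finset.mem_image]
      constructor
      · rintro ⟨⟨ha, hb⟩, h⟩
        exact ⟨a, ha, by rw [Sym2.diag]; rw [show b = a from h.symm]⟩
      · rintro ⟨c, hc, h⟩
        rw [Sym2.diag] at h
        rw [Sym2.eq_iff] at h
        rcases h with ⟨rfl, rfl⟩ | ⟨rfl, rfl⟩ <;> exact ⟨⟨hc, hc⟩, rfl⟩
  have hcard : T.sym2.card = (T.card + 1).choose 2 := Finset.card_sym2 T
  have hsplit := Finset.card_filter_add_card_filter_not
    (s := T.sym2) (p := fun e => e.IsDiag)
  have hdcard : (T.sym2.filter (fun e => e.IsDiag)).card = T.card := by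
    rw [hdiag, Finset.card_image_of_injective _ Sym2.diag_injective]
  have hchoose : (T.card + 1).choose 2 = T.card.choose 2 + T.card := by
    rw [Nat.choose_succ_succ, Nat.choose_one_right, Nat.add_comm]
  unfold qVal
  rw [hset]
  omega

end Aux3
section Final
open Finset

local notation "cc" => (Complex.exp (Complex.I * (Real.pi / 4)) / (Real.sqrt 2 : ℂ))

variable {V : Type} [Fintype V] [DecidableEq V]

lemma hsingle (g : (V → Bool) → ℂ) (z : V → Bool) :
    ∑ x : V → Bool, g x * (if x = z then (1:ℂ) else 0) = g z := by
  simp [mul_ite, Finset.sum_ite_eq']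

lemma sqrtXdag_apply (u : V) (sqrtXdag : QState V → QState V)
    (hdag : ∀ φ ψ : QState V, qInner φ (sqrtX u ψ) = qInner (sqrtXdag φ) ψ)
    (φ : QState V) (y : V → Bool) :
    sqrtXdag φ y = (starRingEnd ℂ) cc *
      (φ y + Complex.I * φ (Function.update y u (!y u))) := by
  have h := hdag φ (fun x => if x = y then 1 else 0)
  have hR : qInner (sqrtXdag φ) (fun x => if x = y then 1 else 0)
      = (starRingEnd ℂ) (sqrtXdag φ y) := by
    simp only [qInner]
    exact hsingle (fun x => (starRingEnd ℂ) (sqrtXdag φ x)) y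
  have hL : qInner φ (sqrtX u (fun x => if x = y then 1 else 0))
      = cc * ((starRingEnd ℂ) (φ y))
        - cc * Complex.I * ((starRingEnd ℂ) (φ (Function.update y u (!y u)))) := by
    simp only [qInner, sqrtX, Xop]
    have key : ∀ x : V → Bool,
        (starRingEnd ℂ) (φ x) * (cc * ((if x = y then (1:ℂ) else 0)
            - Complex.I * (if Function.update x u (!x u) = y then (1:ℂ) else 0)))
        = cc * ((starRingEnd ℂ) (φ x) * (if x = y then (1:ℂ) else 0))
          - cc * Complex.I * ((starRingEnd ℂ) (φ x) *
              (if x = Function.update y u (!y u) then (1:ℂ) else 0)) := by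
      intro x
      rw [show ((if Function.update x u (!x u) = y then (1:ℂ) else 0))
          = (if x = Function.update y u (!y u) then (1:ℂ) else 0) by
        simp only [update_not_eq_iff]]
      ring
    rw [Finset.sum_congr rfl (fun x _ => key x), Finset.sum_sub_distrib,
      ← Finset.mul_sum, ← Finset.mul_sum,
      hsingle (fun x => (starRingEnd ℂ) (φ x)) y,
      hsingle (fun x => (starRingEnd ℂ) (φ x)) (Function.update y u (!y u))]
  have h2 : (starRingEnd ℂ) (sqrtXdag φ y)
      = cc * ((starRingEnd ℂ) (φ y))
        - cc * Complex.I * ((starRingEnd ℂ) (φ (Function.update y u (!y u)))) := by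
    rw [← hR, ← h, hL]
  calc sqrtXdag φ y = (starRingEnd ℂ) ((starRingEnd ℂ) (sqrtXdag φ y)) :=
        (Complex.conj_conj _).symm
    _ = (starRingEnd ℂ) (cc * ((starRingEnd ℂ) (φ y))
          - cc * Complex.I * ((starRingEnd ℂ) (φ (Function.update y u (!y u))))) := by
        rw [h2]
    _ = (starRingEnd ℂ) cc * (φ y + Complex.I * φ (Function.update y u (!y u))) := by
        rw [map_sub, map_mul, map_mul, map_mul, Complex.conj_conj, Complex.conj_conj,
          Complex.conj_I]
        ring

end Final
/-- `(√X_u)† · √Z_{N(u)} · |G⟩ = |G*u⟩`, where `(√X_u)†` is the adjoint of `√X_u`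
(characterized by `⟨φ|√X_u ψ⟩ = ⟨(√X_u)† φ|ψ⟩` for all `φ, ψ`). -/
theorem localComp_graphState {V : Type} [Fintype V] [DecidableEq V]
    (G : SimpleGraph V) [DecidableRel G.Adj] (u : V)
    (sqrtXdag : QState V → QState V)
    (hdag : ∀ φ ψ : QState V, qInner φ (sqrtX u ψ) = qInner (sqrtXdag φ) ψ) :
    sqrtXdag (sqrtZset (G.neighborFinset u) (graphState G)) = graphState (localComp G u) := by
  funext y
  have hNfilter : ((G.neighborFinset u).filter
        (fun v => Function.update y u (!y u) v = true))
      = (G.neighborFinset u).filter (fun v => y v = true) := by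
    apply Finset.filter_congr
    intro v hv
    rw [SimpleGraph.mem_neighborFinset] at hv
    rw [Function.update_of_ne (G.ne_of_adj hv).symm]
  rw [sqrtXdag_apply u sqrtXdag hdag]
  rw [sqrtZset_apply, sqrtZset_apply, hNfilter]
  unfold graphState
  have hsum := qVal_add_update G u y
  have hsq : (-1:ℂ)^(qVal G y) * (-1:ℂ)^(qVal G y) = 1 := by
    rw [← pow_add, ← two_mul, pow_mul]; norm_num
  have h1 : ((-1:ℂ))^(qVal G y) * (-1:ℂ)^(qVal G (Function.update y u (!y u)))
      = (-1:ℂ)^(((G.neighborFinset u).filter (fun v => y v = true)).card) := by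
    rw [← pow_add, hsum, pow_add, pow_mul]; norm_num
  have e1 : ((-1:ℂ))^(qVal G (Function.update y u (!y u)))
      = (-1:ℂ)^(((G.neighborFinset u).filter (fun v => y v = true)).card)
        * (-1:ℂ)^(qVal G y) := by
    calc (-1:ℂ)^(qVal G (Function.update y u (!y u)))
        = ((-1:ℂ)^(qVal G y) * (-1:ℂ)^(qVal G y))
            * (-1:ℂ)^(qVal G (Function.update y u (!y u))) := by rw [hsq, one_mul]
      _ = (-1:ℂ)^(qVal G y)
            * (-1:ℂ)^(((G.neighborFinset u).filter (fun v => y v = true)).card) := by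
          rw [mul_assoc, h1]
      _ = _ := mul_comm _ _
  have hf : ∀ e : Sym2 V, (if ∀ v ∈ e, y v = true then (-1:ℂ) else 1)
      * (if ∀ v ∈ e, y v = true then (-1:ℂ) else 1) = 1 := by
    intro e; split_ifs <;> norm_num
  have e2 : ((-1:ℂ))^(qVal (localComp G u) y)
      = (-1:ℂ)^(qVal G y)
        * (-1:ℂ)^((((G.neighborFinset u).filter (fun v => y v = true)).card).choose 2) := by
    rw [← neg_one_pow_qVal, edgeFinset_localComp, prod_symmDiff_of_sq_one _ _ _ hf,
      neg_one_pow_qVal, neg_one_pow_qVal, qVal_nbrGraph]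
  have e3 := key_scalar (((G.neighborFinset u).filter (fun v => y v = true)).card)
  rw [e1, e2]
  linear_combination ((-1:ℂ)^(qVal G y) / (Real.sqrt (2 ^ Fintype.card V) : ℂ)) * e3
end

section
/- Let R be a real local Clifford transformation on the qubit set V, let G₁, G₂ be finite simple graphs on V and S₁, S₂ ⊆ V. If R|G₁;S₁⟩ = λ|G₂;S₂⟩ for some scalar λ with |λ|=1, then there exist subsets A, S₁', S₂' ⊆ V and a scalar μ with |μ|=1 such that H_A |G₁;S₁'⟩ = μ|G₂;S₂'⟩. -/
/-- The Pauli matrix `X`. -/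
def pXm : Matrix (Fin 2) (Fin 2) ℂ := !![0, 1; 1, 0]

/-- The Pauli matrix `Y`. -/
noncomputable def pYm : Matrix (Fin 2) (Fin 2) ℂ := !![0, -Complex.I; Complex.I, 0]

/-- The Pauli matrix `Z`. -/
def pZm : Matrix (Fin 2) (Fin 2) ℂ := !![1, 0; 0, -1]

/-- A real local Clifford transformation on `V` is (given by) a family of 2×2 unitary
matrices with real entries, each mapping the Pauli matrices `X` and `Z` to elements of
`{±X, ±Y, ±Z}` under conjugation. -/
def IsRealLocalClifford {V : Type*} (C : V → Matrix (Fin 2) (Fin 2) ℂ) : Prop :=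
  ∀ u, C u ∈ Matrix.unitaryGroup (Fin 2) ℂ ∧
    (∀ i j, (C u i j).im = 0) ∧
    (C u * pXm * (C u).conjTranspose ∈ ({pXm, -pXm, pYm, -pYm, pZm, -pZm} : Set (Matrix (Fin 2) (Fin 2) ℂ))) ∧
    (C u * pZm * (C u).conjTranspose ∈ ({pXm, -pXm, pYm, -pYm, pZm, -pZm} : Set (Matrix (Fin 2) (Fin 2) ℂ)))

/-- Index computational basis values `Bool` by `Fin 2`. -/
def b2 (b : Bool) : Fin 2 := if b then 1 else 0

/-- Apply the local (tensor product) operator `⊗_{u∈V} C_u` to a state. -/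
noncomputable def applyLocal {V : Type*} [Fintype V] [DecidableEq V]
    (C : V → Matrix (Fin 2) (Fin 2) ℂ) (ψ : QState V) : QState V :=
  fun x => ∑ y : V → Bool, (∏ u, C u (b2 (x u)) (b2 (y u))) * ψ y

/-- The Hadamard matrix. -/
noncomputable def Hmat : Matrix (Fin 2) (Fin 2) ℂ := (Real.sqrt 2 : ℂ)⁻¹ • !![1, 1; 1, -1]


local notation "Mat" => Matrix (Fin 2) (Fin 2) ℂ

def RealEnt (M : Mat) : Prop := ∀ i j, (M i j).im = 0

lemma realEnt_mul {M N : Mat} (hM : RealEnt M) (hN : RealEnt N) : RealEnt (M * N) := by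
  intro i j
  rw [Matrix.mul_apply]
  rw [Complex.im_sum]
  apply Finset.sum_eq_zero
  intro k _
  rw [Complex.mul_im, hM i k, hN k j]
  ring

lemma realEnt_star {M : Mat} (hM : RealEnt M) : RealEnt (star M) := by
  intro i j
  simp [Matrix.conjTranspose_apply, hM j i]

lemma realEnt_X : RealEnt pXm := by
  intro i j; fin_cases i <;> fin_cases j <;> simp [pXm]

lemma realEnt_Z : RealEnt pZm := by
  intro i j; fin_cases i <;> fin_cases j <;> simp [pZm]

lemma realEnt_H : RealEnt Hmat := by
  intro i j; fin_cases i <;> fin_cases j <;>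
    simp [Hmat, Complex.ofReal_inv]

lemma realEnt_one : RealEnt (1 : Mat) := by
  intro i j; fin_cases i <;> fin_cases j <;> simp

lemma star_X : star pXm = pXm := by
  ext i j; fin_cases i <;> fin_cases j <;> simp [pXm]

lemma star_Z : star pZm = pZm := by
  ext i j; fin_cases i <;> fin_cases j <;> simp [pZm]

lemma star_H : star Hmat = Hmat := by
  ext i j; fin_cases i <;> fin_cases j <;>
    simp [Hmat, Complex.ext_iff]

lemma XX : pXm * pXm = 1 := by
  simp [pXm, Matrix.mul_fin_two, Matrix.one_fin_two]

lemma ZZ : pZm * pZm = 1 := by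
  simp [pZm, Matrix.mul_fin_two, Matrix.one_fin_two]

lemma HH : Hmat * Hmat = 1 := by
  have hs : (Real.sqrt 2 : ℂ) * (Real.sqrt 2 : ℂ) = 2 := by
    norm_cast
    rw [Real.mul_self_sqrt] <;> norm_num
  have hne : (Real.sqrt 2 : ℂ) ≠ 0 := by
    intro h0
    rw [h0, mul_zero] at hs
    norm_num at hs
  have h2 : ((Real.sqrt 2 : ℂ))⁻¹ * (Real.sqrt 2 : ℂ)⁻¹ * 2 = 1 := by
    field_simp
    linear_combination -hs
  simp only [Hmat, Matrix.smul_mul, Matrix.mul_smul, smul_smul, Matrix.mul_fin_two]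
  norm_num
  ext i j; fin_cases i <;> fin_cases j <;>
    simp [Matrix.one_fin_two] <;> linear_combination h2

example : True := trivial

/-- Conjugation of matrices. -/
noncomputable def cjm (M P : Matrix (Fin 2) (Fin 2) ℂ) : Matrix (Fin 2) (Fin 2) ℂ := M * P * star M

lemma cjm_mul (M N P : Mat) : cjm (M * N) P = cjm M (cjm N P) := by
  simp only [cjm, star_mul]
  noncomm_ring

lemma cjm_one (P : Mat) : cjm 1 P = P := by simp [cjm]

lemma cjm_neg (M P : Mat) : cjm M (-P) = -(cjm M P) := by simp [cjm]

lemma s2c : (Real.sqrt 2 : ℂ) * (Real.sqrt 2 : ℂ) = 2 := by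
  norm_cast
  rw [Real.mul_self_sqrt] <;> norm_num

lemma cj_H_X : cjm Hmat pXm = pZm := by
  have h2 := s2c
  rw [cjm, star_H]
  simp only [Hmat, Matrix.smul_mul, Matrix.mul_smul, smul_smul, pXm, Matrix.mul_fin_two]
  norm_num
  ext i j
  fin_cases i <;> fin_cases j <;>
    simp [pZm] <;> field_simp <;> linear_combination -h2

lemma cj_H_Z : cjm Hmat pZm = pXm := by
  have h2 := s2c
  rw [cjm, star_H]
  simp only [Hmat, Matrix.smul_mul, Matrix.mul_smul, smul_smul, pZm, Matrix.mul_fin_two]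
  norm_num
  ext i j
  fin_cases i <;> fin_cases j <;>
    simp [pXm] <;> field_simp <;> linear_combination -h2

lemma cj_X_X : cjm pXm pXm = pXm := by
  rw [cjm, star_X]
  simp [pXm, Matrix.mul_fin_two]

lemma cj_X_Z : cjm pXm pZm = -pZm := by
  rw [cjm, star_X]
  simp [pXm, pZm, Matrix.mul_fin_two]

lemma cj_Z_X : cjm pZm pXm = -pXm := by
  rw [cjm, star_Z]
  simp [pXm, pZm, Matrix.mul_fin_two]

lemma cj_Z_Z : cjm pZm pZm = pZm := by
  rw [cjm, star_Z]
  simp [pZm, Matrix.mul_fin_two]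

lemma comm_scalar {D : Mat} (hX : D * pXm = pXm * D) (hZ : D * pZm = pZm * D) :
    D = D 0 0 • 1 := by
  have eZ := fun i j => (Matrix.ext_iff.mpr hZ) i j
  have eX := fun i j => (Matrix.ext_iff.mpr hX) i j
  have h01 : D 0 1 = 0 := by
    have := eZ 0 1
    simp [Matrix.mul_apply, Fin.sum_univ_two, pZm] at this
    linear_combination (-1/2 : ℂ) * this
  have h10 : D 1 0 = 0 := by
    have := eZ 1 0
    simp [Matrix.mul_apply, Fin.sum_univ_two, pZm] at this
    linear_combination (1/2 : ℂ) * this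
  have hdiag : D 0 0 = D 1 1 := by
    have := eX 0 1
    simp [Matrix.mul_apply, Fin.sum_univ_two, pXm] at this
    linear_combination this
  ext i j
  fin_cases i <;> fin_cases j <;>
    simp [Matrix.one_apply, h01, h10, hdiag.symm]

lemma eq_up_to_sign (Cm M : Mat)
    (hC1 : Cm * star Cm = 1) (hC2 : star Cm * Cm = 1)
    (hM1 : M * star M = 1) (hM2 : star M * M = 1)
    (hCr : RealEnt Cm) (hMr : RealEnt M)
    (hX : cjm Cm pXm = cjm M pXm) (hZ : cjm Cm pZm = cjm M pZm) :
    Cm = M ∨ Cm = -M := by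
  set D := star M * Cm with hD
  have key : ∀ P : Mat, cjm Cm P = cjm M P → D * P = P * D := by
    intro P hP
    have h1 : star M * (Cm * P * star Cm) * Cm = D * P := by
      have e : star M * (Cm * P * star Cm) * Cm = (star M * Cm) * P * (star Cm * Cm) := by
        noncomm_ring
      rw [e, hC2, mul_one, hD]
    have h2 : star M * (M * P * star M) * Cm = P * D := by
      have e : star M * (M * P * star M) * Cm = (star M * M) * P * (star M * Cm) := by
        noncomm_ring
      rw [e, hM2, one_mul, hD]
    have := congrArg (fun A => star M * A * Cm) hP
    simp only [cjm] at this
    rw [h1, h2] at this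
    exact this
  have hcX := key pXm hX
  have hcZ := key pZm hZ
  have hDs : D = D 0 0 • 1 := comm_scalar hcX hcZ
  set d : ℂ := D 0 0 with hd
  have hDr : RealEnt D := realEnt_mul (realEnt_star hMr) hCr
  have hdre : (starRingEnd ℂ) d = d := Complex.conj_eq_iff_im.mpr (hDr 0 0)
  have hDu : star D * D = 1 := by
    have e : star D * D = star Cm * (M * star M) * Cm := by
      rw [hD, star_mul, star_star]
      noncomm_ring
    rw [e, hM1, mul_one, hC2]
  have hdd : d * d = 1 := by
    rw [hDs] at hDu
    have : (d * (starRingEnd ℂ) d) • (1 : Mat) = 1 := by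
      simpa [smul_smul] using hDu
    have := congrArg (fun A : Mat => A 0 0) this
    simp [Matrix.one_apply] at this
    rw [hdre] at this
    exact this
  have hCM : Cm = d • M := by
    have : M * D = Cm := by
      rw [hD, ← mul_assoc, hM1, one_mul]
    rw [← this, hDs]
    rw [Matrix.mul_smul, mul_one]
  rcases mul_self_eq_one_iff.mp hdd with h | h
  · left; rw [hCM, h, one_smul]
  · right; rw [hCM, h, neg_one_smul]

lemma notY_of_real {A : Mat} (hA : RealEnt A) : A ≠ pYm ∧ A ≠ -pYm := by
  constructor <;> intro h <;> rw [h] at hA <;> have := hA 0 1 <;>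
    simp [pYm] at this

lemma not_same_letter (Cm : Mat) (hC2 : star Cm * Cm = 1) (P : Mat) (hPP : P * P = 1)
    (s s' : ℂ) (hss : s * s' ≠ 0)
    (hX : Cm * pXm * star Cm = s • P) (hZ : Cm * pZm * star Cm = s' • P) : False := by
  have e : (Cm * pXm * star Cm) * (Cm * pZm * star Cm)
      = Cm * (pXm * ((star Cm * Cm) * pZm)) * star Cm := by noncomm_ring
  rw [hC2, one_mul, hX, hZ] at e
  have e2 : Cm * (pXm * pZm) * star Cm = (s * s') • 1 := by
    rw [← e, Matrix.smul_mul, Matrix.mul_smul, hPP, smul_smul]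
  have e3 : pXm * pZm = (s * s') • 1 := by
    have l : star Cm * (Cm * (pXm * pZm) * star Cm) * Cm
        = (star Cm * Cm) * (pXm * pZm) * (star Cm * Cm) := by noncomm_ring
    rw [e2] at l
    rw [hC2, one_mul, mul_one] at l
    rw [← l, Matrix.mul_smul, Matrix.smul_mul, mul_one, hC2]
  have := congrArg (fun A : Mat => A 0 0) e3
  simp [pXm, pZm, Matrix.mul_apply, Fin.sum_univ_two, Matrix.one_apply] at this
  apply hss
  rcases this with h | h <;> simp [h]

lemma uX : pXm * star pXm = 1 ∧ star pXm * pXm = 1 := by rw [star_X]; exact ⟨XX, XX⟩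
lemma uZ : pZm * star pZm = 1 ∧ star pZm * pZm = 1 := by rw [star_Z]; exact ⟨ZZ, ZZ⟩
lemma uH : Hmat * star Hmat = 1 ∧ star Hmat * Hmat = 1 := by rw [star_H]; exact ⟨HH, HH⟩
lemma u1 : (1 : Mat) * star (1 : Mat) = 1 ∧ star (1 : Mat) * (1 : Mat) = 1 := by simp

lemma unit_mul {M N : Mat} (hM : M * star M = 1 ∧ star M * M = 1)
    (hN : N * star N = 1 ∧ star N * N = 1) :
    (M * N) * star (M * N) = 1 ∧ star (M * N) * (M * N) = 1 := by
  rw [star_mul]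
  constructor
  · have e : M * N * (star N * star M) = M * (N * star N) * star M := by noncomm_ring
    rw [e, hN.1, mul_one, hM.1]
  · have e : star N * star M * (M * N) = star N * (star M * M) * N := by noncomm_ring
    rw [e, hM.2, mul_one, hN.2]

/-- The canonical matrix for given Booleans. -/
noncomputable def canM (a b cc : Bool) : Mat :=
  (if cc then Hmat else 1) * ((if a then pXm else 1) * (if b then pZm else 1))

lemma unit_canM (a b cc : Bool) :
    canM a b cc * star (canM a b cc) = 1 ∧ star (canM a b cc) * canM a b cc = 1 := by
  cases a <;> cases b <;> cases cc <;>
    simp only [canM, if_true, if_false] <;>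
    first
      | exact unit_mul u1 (unit_mul u1 u1)
      | exact unit_mul u1 (unit_mul u1 uZ)
      | exact unit_mul uH (unit_mul u1 u1)
      | exact unit_mul uH (unit_mul u1 uZ)
      | exact unit_mul u1 (unit_mul uX u1)
      | exact unit_mul u1 (unit_mul uX uZ)
      | exact unit_mul uH (unit_mul uX u1)
      | exact unit_mul uH (unit_mul uX uZ)

lemma realEnt_canM (a b cc : Bool) : RealEnt (canM a b cc) := by
  cases a <;> cases b <;> cases cc <;>
    simp only [canM, if_true, if_false] <;>
    first
      | exact realEnt_mul realEnt_one (realEnt_mul realEnt_one realEnt_one)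
      | exact realEnt_mul realEnt_one (realEnt_mul realEnt_one realEnt_Z)
      | exact realEnt_mul realEnt_H (realEnt_mul realEnt_one realEnt_one)
      | exact realEnt_mul realEnt_H (realEnt_mul realEnt_one realEnt_Z)
      | exact realEnt_mul realEnt_one (realEnt_mul realEnt_X realEnt_one)
      | exact realEnt_mul realEnt_one (realEnt_mul realEnt_X realEnt_Z)
      | exact realEnt_mul realEnt_H (realEnt_mul realEnt_X realEnt_one)
      | exact realEnt_mul realEnt_H (realEnt_mul realEnt_X realEnt_Z)

lemma cjX_canM (a b cc : Bool) :
    cjm (canM a b cc) pXm = (if b then (-1 : ℂ) else 1) • (if cc then pZm else pXm) := by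
  cases a <;> cases b <;> cases cc <;>
    simp [canM, cjm_mul, cjm_one, cj_X_X, cj_X_Z, cj_Z_X, cj_Z_Z, cj_H_X, cj_H_Z, cjm_neg]

lemma cjZ_canM (a b cc : Bool) :
    cjm (canM a b cc) pZm = (if a then (-1 : ℂ) else 1) • (if cc then pXm else pZm) := by
  cases a <;> cases b <;> cases cc <;>
    simp [canM, cjm_mul, cjm_one, cj_X_X, cj_X_Z, cj_Z_X, cj_Z_Z, cj_H_X, cj_H_Z, cjm_neg]

lemma oneQubitAux (Cm : Mat) (hC1 : Cm * star Cm = 1) (hC2 : star Cm * Cm = 1)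
    (hCr : RealEnt Cm) (a b cc : Bool)
    (hX : Cm * pXm * star Cm = (if b then (-1 : ℂ) else 1) • (if cc then pZm else pXm))
    (hZ : Cm * pZm * star Cm = (if a then (-1 : ℂ) else 1) • (if cc then pXm else pZm)) :
    ∃ (d : ℂ) (a' b' c' : Bool), (d = 1 ∨ d = -1) ∧ Cm = d • canM a' b' c' := by
  have h := eq_up_to_sign Cm (canM a b cc) hC1 hC2 (unit_canM a b cc).1 (unit_canM a b cc).2
      hCr (realEnt_canM a b cc)
      (by rw [cjX_canM]; exact hX) (by rw [cjZ_canM]; exact hZ)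
  rcases h with h | h
  · exact ⟨1, a, b, cc, Or.inl rfl, by rw [h, one_smul]⟩
  · exact ⟨-1, a, b, cc, Or.inr rfl, by rw [h, neg_one_smul]⟩

lemma oneQubit (Cm : Mat) (hu : Cm ∈ Matrix.unitaryGroup (Fin 2) ℂ) (hr : RealEnt Cm)
    (hX : Cm * pXm * Cm.conjTranspose ∈ ({pXm, -pXm, pYm, -pYm, pZm, -pZm} : Set Mat))
    (hZ : Cm * pZm * Cm.conjTranspose ∈ ({pXm, -pXm, pYm, -pYm, pZm, -pZm} : Set Mat)) :
    ∃ (d : ℂ) (a b cc : Bool), (d = 1 ∨ d = -1) ∧ Cm = d • canM a b cc := by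
  have hC1 : Cm * star Cm = 1 := Matrix.mem_unitaryGroup_iff.mp hu
  have hC2 : star Cm * Cm = 1 := Matrix.mem_unitaryGroup_iff'.mp hu
  have hstar : Cm.conjTranspose = star Cm := rfl
  rw [hstar] at hX hZ
  have hXr : RealEnt (Cm * pXm * star Cm) :=
    realEnt_mul (realEnt_mul hr realEnt_X) (realEnt_star hr)
  have hZr : RealEnt (Cm * pZm * star Cm) :=
    realEnt_mul (realEnt_mul hr realEnt_Z) (realEnt_star hr)
  simp only [Set.mem_insert_iff, Set.mem_singleton_iff] at hX hZ
  rcases hX with hX | hX | hX | hX | hX | hX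
  · rcases hZ with hZ | hZ | hZ | hZ | hZ | hZ
    · exact (not_same_letter Cm hC2 pXm XX 1 1 (by norm_num) (by simpa using hX) (by simpa using hZ)).elim
    · exact (not_same_letter Cm hC2 pXm XX 1 (-1) (by norm_num) (by simpa using hX) (by simpa using hZ)).elim
    · exact absurd hZ (notY_of_real hZr).1
    · exact absurd hZ (notY_of_real hZr).2
    · exact oneQubitAux Cm hC1 hC2 hr false false false (by simpa using hX) (by simpa using hZ)
    · exact oneQubitAux Cm hC1 hC2 hr true false false (by simpa using hX) (by simpa using hZ)
  · rcases hZ with hZ | hZ | hZ | hZ | hZ | hZ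
    · exact (not_same_letter Cm hC2 pXm XX (-1) 1 (by norm_num) (by simpa using hX) (by simpa using hZ)).elim
    · exact (not_same_letter Cm hC2 pXm XX (-1) (-1) (by norm_num) (by simpa using hX) (by simpa using hZ)).elim
    · exact absurd hZ (notY_of_real hZr).1
    · exact absurd hZ (notY_of_real hZr).2
    · exact oneQubitAux Cm hC1 hC2 hr false true false (by simpa using hX) (by simpa using hZ)
    · exact oneQubitAux Cm hC1 hC2 hr true true false (by simpa using hX) (by simpa using hZ)
  · exact absurd hX (notY_of_real hXr).1
  · exact absurd hX (notY_of_real hXr).2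
  · rcases hZ with hZ | hZ | hZ | hZ | hZ | hZ
    · exact oneQubitAux Cm hC1 hC2 hr false false true (by simpa using hX) (by simpa using hZ)
    · exact oneQubitAux Cm hC1 hC2 hr true false true (by simpa using hX) (by simpa using hZ)
    · exact absurd hZ (notY_of_real hZr).1
    · exact absurd hZ (notY_of_real hZr).2
    · exact (not_same_letter Cm hC2 pZm ZZ 1 1 (by norm_num) (by simpa using hX) (by simpa using hZ)).elim
    · exact (not_same_letter Cm hC2 pZm ZZ 1 (-1) (by norm_num) (by simpa using hX) (by simpa using hZ)).elim
  · rcases hZ with hZ | hZ | hZ | hZ | hZ | hZ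
    · exact oneQubitAux Cm hC1 hC2 hr false true true (by simpa using hX) (by simpa using hZ)
    · exact oneQubitAux Cm hC1 hC2 hr true true true (by simpa using hX) (by simpa using hZ)
    · exact absurd hZ (notY_of_real hZr).1
    · exact absurd hZ (notY_of_real hZr).2
    · exact (not_same_letter Cm hC2 pZm ZZ (-1) 1 (by norm_num) (by simpa using hX) (by simpa using hZ)).elim
    · exact (not_same_letter Cm hC2 pZm ZZ (-1) (-1) (by norm_num) (by simpa using hX) (by simpa using hZ)).elim

-- STATE PART
section StatePart

variable {V : Type*} [Fintype V] [DecidableEq V]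

lemma prodg (s : Finset V) (p : V → Prop) [DecidablePred p] :
    ∏ v ∈ s, (if p v then (-1 : ℂ) else 1) = (-1) ^ (s.filter p).card := by
  rw [Finset.prod_ite]
  simp

lemma prod_symmDiff_eq (S T : Finset V) (f : V → ℂ) (hf : ∀ v, f v * f v = 1) :
    (∏ v ∈ S, f v) * ∏ v ∈ T, f v = ∏ v ∈ symmDiff S T, f v := by
  have dST : Disjoint (S \ T) (S ∩ T) := Finset.disjoint_sdiff_inter S T
  have dTS : Disjoint (T \ S) (T ∩ S) := Finset.disjoint_sdiff_inter T S
  have hS : ∏ v ∈ S, f v = (∏ v ∈ S \ T, f v) * ∏ v ∈ S ∩ T, f v := by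
    rw [← Finset.prod_union dST, Finset.sdiff_union_inter]
  have hT : ∏ v ∈ T, f v = (∏ v ∈ T \ S, f v) * ∏ v ∈ T ∩ S, f v := by
    rw [← Finset.prod_union dTS, Finset.sdiff_union_inter]
  have hsd : ∏ v ∈ symmDiff S T, f v = (∏ v ∈ S \ T, f v) * ∏ v ∈ T \ S, f v := by
    rw [symmDiff_def, Finset.sup_eq_union, Finset.prod_union disjoint_sdiff_sdiff]
  have hsq : (∏ v ∈ S ∩ T, f v) * ∏ v ∈ T ∩ S, f v = 1 := by
    rw [Finset.inter_comm T S, ← Finset.prod_mul_distrib]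
    exact Finset.prod_eq_one fun v _ => hf v
  rw [hS, hT, hsd]
  calc ((∏ v ∈ S \ T, f v) * ∏ v ∈ S ∩ T, f v) * ((∏ v ∈ T \ S, f v) * ∏ v ∈ T ∩ S, f v)
      = ((∏ v ∈ S \ T, f v) * ∏ v ∈ T \ S, f v) * ((∏ v ∈ S ∩ T, f v) * ∏ v ∈ T ∩ S, f v) := by
        ring
    _ = (∏ v ∈ S \ T, f v) * ∏ v ∈ T \ S, f v := by rw [hsq, mul_one]

/-- sign of the support of `x` in `S`, as a product. -/
lemma zsign_eq (S : Finset V) (x : V → Bool) :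
    (-1 : ℂ) ^ (S.filter (fun u => x u = true)).card
      = ∏ v ∈ S, (if x v = true then (-1 : ℂ) else 1) := (prodg S _).symm

lemma Zop_Zop (B S : Finset V) (ψ : QState V) :
    Zop B (Zop S ψ) = Zop (symmDiff S B) ψ := by
  funext x
  simp only [Zop]
  rw [zsign_eq, zsign_eq, zsign_eq]
  rw [← mul_assoc]
  rw [show (∏ v ∈ B, (if x v = true then (-1:ℂ) else 1)) * ∏ v ∈ S, (if x v = true then (-1:ℂ) else 1)
      = (∏ v ∈ S, (if x v = true then (-1:ℂ) else 1)) * ∏ v ∈ B, (if x v = true then (-1:ℂ) else 1) from mul_comm _ _]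
  rw [prod_symmDiff_eq S B _ (by intro v; split_ifs <;> norm_num)]

lemma Xop_smul (u : V) (c : ℂ) (ψ : QState V) : Xop u (c • ψ) = c • Xop u ψ := by
  funext x
  simp [Xop]

/-- Flip all the bits in `T`. -/
def FlipSet (T : Finset V) (ψ : QState V) : QState V :=
  fun x => ψ (fun v => if v ∈ T then !x v else x v)

lemma FlipSet_empty (ψ : QState V) : FlipSet ∅ ψ = ψ := by
  funext x
  simp [FlipSet]

lemma FlipSet_insert {a : V} {T : Finset V} (ha : a ∉ T) (ψ : QState V) :
    FlipSet (insert a T) ψ = Xop a (FlipSet T ψ) := by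
  funext x
  simp only [FlipSet, Xop]
  congr 1
  funext v
  by_cases hv : v = a
  · subst hv
    simp [ha, Function.update_self]
  · simp [Function.update_of_ne hv, Finset.mem_insert, hv]

lemma update_sign_prod (S : Finset V) (x : V → Bool) (u : V) :
    (∏ v ∈ S, (if Function.update x u (!x u) v = true then (-1 : ℂ) else 1))
      = (if u ∈ S then (-1 : ℂ) else 1) * ∏ v ∈ S, (if x v = true then (-1 : ℂ) else 1) := by
  by_cases hu : u ∈ S
  · rw [if_pos hu]
    rw [← Finset.mul_prod_erase S _ hu, ← Finset.mul_prod_erase S (fun v => if x v = true then (-1:ℂ) else 1) hu]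
    have h1 : (∏ v ∈ S.erase u, (if Function.update x u (!x u) v = true then (-1:ℂ) else 1))
        = ∏ v ∈ S.erase u, (if x v = true then (-1:ℂ) else 1) := by
      apply Finset.prod_congr rfl
      intro v hv
      rw [Function.update_of_ne (Finset.ne_of_mem_erase hv)]
    rw [h1, Function.update_self]
    cases hxu : x u <;> simp <;> ring
  · rw [if_neg hu, one_mul]
    apply Finset.prod_congr rfl
    intro v hv
    have hvu : v ≠ u := by rintro rfl; exact hu hv
    rw [Function.update_of_ne hvu]

lemma qsign_eq (G : SimpleGraph V) [DecidableRel G.Adj] (x : V → Bool) :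
    (-1 : ℂ) ^ qVal G x = ∏ e ∈ G.edgeFinset, (if (∀ v ∈ e, x v = true) then (-1 : ℂ) else 1) := by
  rw [qVal, Finset.prod_ite]
  simp

lemma qsign_update (G : SimpleGraph V) [DecidableRel G.Adj] (x : V → Bool) (u : V) :
    (∏ e ∈ G.edgeFinset, (if (∀ v ∈ e, Function.update x u (!x u) v = true) then (-1 : ℂ) else 1))
      = (∏ e ∈ G.edgeFinset, (if (∀ v ∈ e, x v = true) then (-1 : ℂ) else 1))
        * ∏ v ∈ G.neighborFinset u, (if x v = true then (-1 : ℂ) else 1) := by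
  set x' := Function.update x u (!x u) with hx'
  set F : (V → Bool) → Sym2 V → ℂ := fun y e => if (∀ v ∈ e, y v = true) then (-1 : ℂ) else 1 with hF
  have hFsq : ∀ (y : V → Bool) e, F y e * F y e = 1 := by
    intro y e
    simp only [hF]
    split_ifs <;> norm_num
  have step1 : ∀ e, F x' e = F x e * (F x e * F x' e) := by
    intro e
    rw [← mul_assoc, hFsq, one_mul]
  calc (∏ e ∈ G.edgeFinset, F x' e)
      = ∏ e ∈ G.edgeFinset, (F x e * (F x e * F x' e)) := by
        exact Finset.prod_congr rfl fun e _ => step1 e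
    _ = (∏ e ∈ G.edgeFinset, F x e) * ∏ e ∈ G.edgeFinset, (F x e * F x' e) := by
        rw [Finset.prod_mul_distrib]
    _ = (∏ e ∈ G.edgeFinset, F x e) * ∏ v ∈ G.neighborFinset u, (if x v = true then (-1 : ℂ) else 1) := by
        congr 1
        rw [← Finset.prod_filter_mul_prod_filter_not G.edgeFinset (fun e => u ∈ e)]
        have hnot : ∏ e ∈ G.edgeFinset.filter (fun e => ¬ u ∈ e), (F x e * F x' e) = 1 := by
          apply Finset.prod_eq_one
          intro e he
          rw [Finset.mem_filter] at he
          have : F x' e = F x e := by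
            simp only [hF]
            congr 1
            apply propext
            constructor <;> intro hy v hv <;> have hvu : v ≠ u := fun h => he.2 (h ▸ hv)
            · have := hy v hv
              rwa [hx', Function.update_of_ne hvu] at this
            · rw [hx', Function.update_of_ne hvu]
              exact hy v hv
          rw [this, hFsq]
        rw [hnot, mul_one]
        refine Eq.symm (Finset.prod_bij (fun (v : V) (hv : v ∈ G.neighborFinset u) => s(u, v)) ?_ ?_ ?_ ?_)
        · intro v hv
          rw [Finset.mem_filter, SimpleGraph.mem_edgeFinset]
          rw [SimpleGraph.mem_neighborFinset] at hv
          exact ⟨hv, Sym2.mem_mk_left u v⟩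
        · intro v₁ h₁ v₂ h₂ heq
          exact Sym2.congr_right.mp heq
        · intro e he
          rw [Finset.mem_filter, SimpleGraph.mem_edgeFinset] at he
          induction e with
          | _ a b =>
            rcases Sym2.mem_iff.mp he.2 with h | h
            · subst h
              exact ⟨b, by rw [SimpleGraph.mem_neighborFinset]; exact he.1, rfl⟩
            · subst h
              refine ⟨a, by rw [SimpleGraph.mem_neighborFinset]; exact (G.adj_symm he.1), Sym2.eq_swap⟩
        · intro v hv
          rw [SimpleGraph.mem_neighborFinset] at hv
          have hvu : v ≠ u := fun h => G.loopless.irrefl u (h ▸ hv)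
          have hmem : ∀ (y : V → Bool), (∀ w ∈ s(u, v), y w = true) ↔ (y u = true ∧ y v = true) := by
            intro y
            constructor
            · intro hy
              exact ⟨hy u (Sym2.mem_mk_left u v), hy v (Sym2.mem_mk_right u v)⟩
            · rintro ⟨h1, h2⟩ w hw
              rcases Sym2.mem_iff.mp hw with h | h <;> subst h <;> assumption
          simp only [hF, hmem]
          rw [hx']
          rw [Function.update_self, Function.update_of_ne hvu]
          cases hxu : x u <;> cases hxv : x v <;> simp

lemma Xop_sgState (G : SimpleGraph V) [DecidableRel G.Adj] (S : Finset V) (u : V) :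
    Xop u (sgState G S)
      = (if u ∈ S then (-1 : ℂ) else 1) • sgState G (symmDiff S (G.neighborFinset u)) := by
  funext x
  simp only [Xop, sgState, Zop, graphState, Pi.smul_apply, smul_eq_mul]
  rw [zsign_eq, zsign_eq]
  rw [div_eq_mul_inv, div_eq_mul_inv, qsign_eq, qsign_eq]
  rw [update_sign_prod, qsign_update]
  rw [← prod_symmDiff_eq S (G.neighborFinset u) _ (by intro v; split_ifs <;> norm_num)]
  ring

lemma FlipSet_sgState (G : SimpleGraph V) [DecidableRel G.Adj] (T : Finset V) :
    ∀ S : Finset V, ∃ (ε : ℂ) (S' : Finset V), (ε = 1 ∨ ε = -1) ∧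
      FlipSet T (sgState G S) = ε • sgState G S' := by
  induction T using Finset.induction_on with
  | empty =>
    intro S
    exact ⟨1, S, Or.inl rfl, by rw [FlipSet_empty, one_smul]⟩
  | @insert a T ha ih =>
    intro S
    obtain ⟨ε, S', hε, hfs⟩ := ih S
    refine ⟨(if a ∈ S' then (-1 : ℂ) else 1) * ε, symmDiff S' (G.neighborFinset a), ?_, ?_⟩
    · rcases hε with h | h <;> subst h <;> split_ifs <;> norm_num
    · rw [FlipSet_insert ha, hfs, Xop_smul, Xop_sgState, smul_smul, mul_comm ε]

-- entry lemmas
lemma b2_inj {b b' : Bool} (h : b2 b = b2 b') : b = b' := by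
  cases b <;> cases b' <;> simp [b2] at h ⊢

lemma pZm_diag (b : Bool) : pZm (b2 b) (b2 b) = if b then -1 else 1 := by
  cases b <;> simp [pZm, b2]

lemma pZm_off {b b' : Bool} (h : b ≠ b') : pZm (b2 b) (b2 b') = 0 := by
  cases b <;> cases b' <;> simp_all [pZm, b2]

lemma pXm_flip (b : Bool) : pXm (b2 b) (b2 (!b)) = 1 := by
  cases b <;> simp [pXm, b2]

lemma pXm_diag (b b' : Bool) (h : b' ≠ !b) : pXm (b2 b) (b2 b') = 0 := by
  cases b <;> cases b' <;> simp_all [pXm, b2]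

lemma one_diag (b : Bool) : (1 : Matrix (Fin 2) (Fin 2) ℂ) (b2 b) (b2 b) = 1 := by
  simp [Matrix.one_apply]

lemma one_off {b b' : Bool} (h : b ≠ b') : (1 : Matrix (Fin 2) (Fin 2) ℂ) (b2 b) (b2 b') = 0 := by
  rw [Matrix.one_apply]
  rw [if_neg (fun hh => h (b2_inj hh))]

lemma applyLocal_mul (M N : V → Matrix (Fin 2) (Fin 2) ℂ) (ψ : QState V) :
    applyLocal (fun u => M u * N u) ψ = applyLocal M (applyLocal N ψ) := by
  funext x
  simp only [applyLocal, Finset.mul_sum]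
  rw [Finset.sum_comm]
  apply Finset.sum_congr rfl
  intro z _
  calc (∏ u, (M u * N u) (b2 (x u)) (b2 (z u))) * ψ z
      = (∑ y : V → Bool, ∏ u, (M u (b2 (x u)) (b2 (y u)) * N u (b2 (y u)) (b2 (z u)))) * ψ z := by
        congr 1
        rw [← Fintype.prod_sum (fun u (b : Bool) => M u (b2 (x u)) (b2 b) * N u (b2 b) (b2 (z u)))]
        apply Finset.prod_congr rfl
        intro u _
        rw [Matrix.mul_apply, Fin.sum_univ_two, Fintype.sum_bool]
        simp [b2]
        ring
    _ = ∑ y : V → Bool, (∏ u, M u (b2 (x u)) (b2 (y u))) * ((∏ u, N u (b2 (y u)) (b2 (z u))) * ψ z) := by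
        rw [Finset.sum_mul]
        apply Finset.sum_congr rfl
        intro y _
        rw [Finset.prod_mul_distrib]
        ring

lemma applyLocal_smul_mats (ε : V → ℂ) (M : V → Matrix (Fin 2) (Fin 2) ℂ) (ψ : QState V) :
    applyLocal (fun u => ε u • M u) ψ = (∏ u, ε u) • applyLocal M ψ := by
  funext x
  simp only [applyLocal, Matrix.smul_apply, smul_eq_mul, Pi.smul_apply]
  rw [Finset.mul_sum]
  apply Finset.sum_congr rfl
  intro y _
  rw [Finset.prod_mul_distrib]
  ring

lemma applyLocal_smul_state (C : V → Matrix (Fin 2) (Fin 2) ℂ) (c : ℂ) (ψ : QState V) :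
    applyLocal C (c • ψ) = c • applyLocal C ψ := by
  funext x
  simp only [applyLocal, Pi.smul_apply, smul_eq_mul]
  rw [Finset.mul_sum]
  apply Finset.sum_congr rfl
  intro y _
  ring

lemma applyLocal_Z (B : Finset V) (ψ : QState V) :
    applyLocal (fun u => if u ∈ B then pZm else 1) ψ = Zop B ψ := by
  funext x
  simp only [applyLocal, Zop]
  rw [Finset.sum_eq_single x]
  · congr 1
    rw [zsign_eq]
    rw [show (∏ v ∈ B, (if x v = true then (-1:ℂ) else 1))
        = ∏ v ∈ Finset.univ.filter (fun v => v ∈ B), (if x v = true then (-1:ℂ) else 1) from by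
      rw [show Finset.univ.filter (fun v => v ∈ B) = B from by ext v; simp]]
    rw [Finset.prod_filter]
    apply Finset.prod_congr rfl
    intro u _
    by_cases hu : u ∈ B
    · rw [if_pos hu, if_pos hu, pZm_diag]
    · rw [if_neg hu, if_neg hu, one_diag]
  · intro y _ hyx
    have : ∃ u, y u ≠ x u := by
      by_contra hno
      push_neg at hno
      exact hyx (funext hno)
    obtain ⟨u, hu⟩ := this
    apply mul_eq_zero_of_left
    apply Finset.prod_eq_zero (Finset.mem_univ u)
    by_cases hB : u ∈ B
    · rw [if_pos hB, pZm_off (Ne.symm hu)]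
    · rw [if_neg hB, one_off (Ne.symm hu)]
  · intro hx
    exact absurd (Finset.mem_univ x) hx

lemma applyLocal_X (T : Finset V) (ψ : QState V) :
    applyLocal (fun u => if u ∈ T then pXm else 1) ψ = FlipSet T ψ := by
  funext x
  simp only [applyLocal, FlipSet]
  rw [Finset.sum_eq_single (fun v => if v ∈ T then !x v else x v)]
  · rw [show (∏ u, (if u ∈ T then pXm else 1) (b2 (x u)) (b2 (if u ∈ T then !x u else x u))) = 1 from ?_, one_mul]
    apply Finset.prod_eq_one
    intro u _
    by_cases hu : u ∈ T
    · rw [if_pos hu, if_pos hu, pXm_flip]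
    · rw [if_neg hu, if_neg hu, one_diag]
  · intro y _ hyx
    have : ∃ u, y u ≠ (if u ∈ T then !x u else x u) := by
      by_contra hno
      push_neg at hno
      exact hyx (funext hno)
    obtain ⟨u, hu⟩ := this
    apply mul_eq_zero_of_left
    apply Finset.prod_eq_zero (Finset.mem_univ u)
    by_cases hT : u ∈ T
    · rw [if_pos hT]
      rw [if_pos hT] at hu
      exact pXm_diag _ _ hu
    · rw [if_neg hT]
      rw [if_neg hT] at hu
      exact one_off (fun h => hu h.symm)
  · intro hx
    exact absurd (Finset.mem_univ _) hx

end StatePart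

/-- If a real local Clifford transformation `R` maps `|G₁;S₁⟩` to `λ|G₂;S₂⟩` with `|λ|=1`,
then there are `A, S₁', S₂' ⊆ V` and `μ` with `|μ|=1` such that
`H_A |G₁;S₁'⟩ = μ|G₂;S₂'⟩`, where `H_A` applies a Hadamard on each qubit of `A`. -/
theorem realClifford_to_hadamards {V : Type} [Fintype V] [DecidableEq V]
    (C : V → Matrix (Fin 2) (Fin 2) ℂ) (hC : IsRealLocalClifford C)
    (G₁ G₂ : SimpleGraph V) [DecidableRel G₁.Adj] [DecidableRel G₂.Adj]
    (S₁ S₂ : Finset V) (c : ℂ) (hc : ‖c‖ = 1)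
    (h : applyLocal C (sgState G₁ S₁) = c • sgState G₂ S₂) :
    ∃ (A S₁' S₂' : Finset V) (μ : ℂ), ‖μ‖ = 1 ∧
      applyLocal (fun u => if u ∈ A then Hmat else 1) (sgState G₁ S₁') = μ • sgState G₂ S₂' := by
  classical
  have hclass : ∀ u, ∃ (d : ℂ) (a b cc : Bool), (d = 1 ∨ d = -1) ∧ C u = d • canM a b cc :=
    fun u => oneQubit (C u) (hC u).1 (hC u).2.1 (hC u).2.2.1 (hC u).2.2.2
  choose d a b cc hd hCeq using hclass
  set A : Finset V := Finset.univ.filter (fun u => cc u = true) with hA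
  set T : Finset V := Finset.univ.filter (fun u => a u = true) with hT
  set B : Finset V := Finset.univ.filter (fun u => b u = true) with hB
  have hCfun : C = fun u => d u • ((if u ∈ A then Hmat else 1) *
      ((if u ∈ T then pXm else 1) * (if u ∈ B then pZm else 1))) := by
    funext u
    rw [hCeq u, canM]
    simp [hA, hT, hB, Finset.mem_filter]
  rw [hCfun, applyLocal_smul_mats, applyLocal_mul, applyLocal_mul, applyLocal_Z, applyLocal_X] at h
  rw [show Zop B (sgState G₁ S₁) = sgState G₁ (symmDiff S₁ B) from by
    rw [sgState, sgState, Zop_Zop]] at h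
  obtain ⟨ε, S'', hεpm, hflip⟩ := FlipSet_sgState G₁ T (symmDiff S₁ B)
  rw [hflip, applyLocal_smul_state, smul_smul] at h
  set k := (∏ u, d u) * ε with hk
  have habsk : ‖k‖ = 1 := by
    rw [hk, norm_mul, norm_prod]
    have h1 : ∀ u ∈ Finset.univ, ‖d u‖ = 1 := fun u _ => by
      rcases hd u with hh | hh <;> rw [hh] <;> simp
    rw [Finset.prod_congr rfl h1, Finset.prod_const_one, one_mul]
    rcases hεpm with hh | hh <;> rw [hh] <;> simp
  have hk0 : k ≠ 0 := by
    intro h0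
    rw [h0] at habsk
    simp at habsk
  refine ⟨A, S'', S₂, k⁻¹ * c, ?_, ?_⟩
  · rw [norm_mul, norm_inv, habsk, hc]
    norm_num
  · have hsc := congrArg (fun ψ : QState V => k⁻¹ • ψ) h
    rw [smul_smul, smul_smul, inv_mul_cancel₀ hk0, one_smul] at hsc
    exact hsc
end
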